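/- Let J be an almost complex structure on V, g an inner product with g(JX, JY) = g(X, Y), and ω(X, Y) := g(JX, Y). Let g′ be any inner product on V which is J-Hermitian, i.e. g′(JX, JY) = g′(X, Y), and let A be the unique endomorphism with ω(X, Y) = g′(AX, Y). Then −A² is g′-positive-definite and A ∘ ((−A²)^{1/2})⁻¹ = J, where (−A²)^{1/2} is the g′-positive-definite square root of −A²; that is, the polar-decomposition construction applied to any J-Hermitian metric g′ recovers the same almost complex structure J. (Pointwise form of Lemma 4.1: the fiber of the projection p_ω over an associated metric g consists exactly of the J-Hermitian metrics.) -/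

import Mathlib

/-!
STATEMENT 9 (pointwise form of Lemma 4.1).

Let `J` be an almost complex structure on `V`, `g` a `J`-Hermitian inner
product, `ω (X, Y) := g (J X, Y)`.  Let `g'` be any `J`-Hermitian inner
product and `A` the endomorphism with `ω (X, Y) = g' (A X, Y)`.  Then `-A²`
is `g'`-positive-definite and `A ∘ ((-A²)^{1/2})⁻¹ = J` for (the)
`g'`-positive-definite square root of `-A²`.
-/

lemma sqrt_unique_aux {V : Type*} [AddCommGroup V] [Module ℝ V] [FiniteDimensional ℝ V]
    (g' : V →ₗ[ℝ] V →ₗ[ℝ] ℝ)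
    (hg'sym : ∀ x y, g' x y = g' y x)
    (hg'pos : ∀ x, x ≠ 0 → 0 < g' x x)
    (H P : Module.End ℝ V)
    (hHsym : ∀ x y, g' (H x) y = g' x (H y))
    (hHpos : ∀ x, x ≠ 0 → 0 < g' (H x) x)
    (hPsym : ∀ x y, g' (P x) y = g' x (P y))
    (hPpos : ∀ x, x ≠ 0 → 0 < g' (P x) x)
    (hsq : H * H = P * P) : H = P := by
  letI core : InnerProductSpace.Core ℝ V :=
    { inner := fun x y => g' x y
      conj_inner_symm := fun x y => by simpa using hg'sym y x
      re_inner_nonneg := fun x => by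
        rcases eq_or_ne x 0 with h | h
        · simp [h]
        · exact le_of_lt (by simpa using hg'pos x h)
      add_left := fun x y z => by simp
      smul_left := fun x y r => by simp [mul_comm]
      definite := fun x hx => by
        by_contra h
        exact (hg'pos x h).ne' (by simpa using hx) }
  letI : NormedAddCommGroup V := core.toNormedAddCommGroup
  letI : InnerProductSpace ℝ V := InnerProductSpace.ofCore core.toCore
  have hinner : ∀ x y : V, (inner ℝ x y : ℝ) = g' x y := fun x y => rfl
  set S : Module.End ℝ V := H - P with hS
  set T : Module.End ℝ V := H + P with hT
  have hSsym : S.IsSymmetric := by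
    intro x y
    simp only [hinner, hS, LinearMap.sub_apply, map_sub, LinearMap.sub_apply]
    rw [hHsym, hPsym]
  have hTpos : ∀ x, x ≠ 0 → 0 < g' (T x) x := by
    intro x hx
    have := hHpos x hx
    have := hPpos x hx
    simp only [hT, LinearMap.add_apply, map_add, LinearMap.add_apply]
    linarith
  have hanti : S * T + T * S = 0 := by
    have : S * T + T * S = 2 * (H * H) - 2 * (P * P) := by
      rw [hS, hT]; noncomm_ring
    rw [this, hsq, sub_self]
  -- spectral theorem for S
  have hfin : Module.finrank ℝ V = Module.finrank ℝ V := rfl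
  suffices hS0 : S = 0 by
    have h' : H - P = 0 := hS ▸ hS0
    exact sub_eq_zero.mp h'
  set b := hSsym.eigenvectorBasis hfin with hb
  have hbeq : ∀ i, S (b i) = hSsym.eigenvalues hfin i • b i :=
    fun i => hSsym.apply_eigenvectorBasis hfin i
  have hbne : ∀ i, b i ≠ 0 := fun i => b.toBasis.ne_zero i
  have heig : ∀ i, hSsym.eigenvalues hfin i = 0 := by
    intro i
    set v := b i with hv
    set μ := hSsym.eigenvalues hfin i with hμ
    have h0 : g' ((S * T + T * S) v) v = 0 := by rw [hanti]; simp
    have h1 : g' (S (T v)) v = μ * g' (T v) v := by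
      have hs := hSsym (T v) v
      simp only [hinner] at hs
      rw [hs, hbeq i, ← hv, ← hμ, map_smul, smul_eq_mul]
    have h2 : g' (T (S v)) v = μ * g' (T v) v := by
      rw [hbeq i, ← hv, ← hμ, map_smul, map_smul, LinearMap.smul_apply, smul_eq_mul]
    have h3 : g' ((S * T + T * S) v) v = 2 * (μ * g' (T v) v) := by
      simp only [LinearMap.add_apply, Module.End.mul_apply, map_add, LinearMap.add_apply, h1, h2]
      ring
    have hTv : 0 < g' (T v) v := hTpos v (hbne i)
    have : μ * g' (T v) v = 0 := by linarith [h3 ▸ h0]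
    rcases mul_eq_zero.mp this with h | h
    · exact h
    · exact absurd h hTv.ne'
  apply b.toBasis.ext
  intro i
  rw [OrthonormalBasis.coe_toBasis, hbeq i, heig i, zero_smul, LinearMap.zero_apply]

theorem space_of_associated_metrics.stmt_9
    {V : Type*} [AddCommGroup V] [Module ℝ V] [FiniteDimensional ℝ V]
    (g : V →ₗ[ℝ] V →ₗ[ℝ] ℝ)
    (hgsym : ∀ x y, g x y = g y x)
    (hgpos : ∀ x, x ≠ 0 → 0 < g x x)
    (J : Module.End ℝ V) (hJ : J * J = -1)
    (hgJ : ∀ x y, g (J x) (J y) = g x y)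
    (g' : V →ₗ[ℝ] V →ₗ[ℝ] ℝ)
    (hg'sym : ∀ x y, g' x y = g' y x)
    (hg'pos : ∀ x, x ≠ 0 → 0 < g' x x)
    (hg'J : ∀ x y, g' (J x) (J y) = g' x y)
    (A : Module.End ℝ V)
    (hA : ∀ x y, g (J x) y = g' (A x) y) :
    ((∀ x y, g' ((-(A * A)) x) y = g' x ((-(A * A)) y)) ∧
     (∀ x, x ≠ 0 → 0 < g' ((-(A * A)) x) x)) ∧
    (∀ H : Module.End ℝ V,
      (∀ x y, g' (H x) y = g' x (H y)) →
      (∀ x, x ≠ 0 → 0 < g' (H x) x) →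
      H * H = -(A * A) →
      A * Ring.inverse H = J) := by
  have hJJ : ∀ x, J (J x) = -x := by
    intro x
    have := LinearMap.ext_iff.mp hJ x
    simpa using this
  -- skewness of J w.r.t. g and g'
  have hskewg : ∀ x y, g (J x) y = - g x (J y) := by
    intro x y
    have := hgJ (J x) y
    rw [hJJ x] at this
    simp only [map_neg, LinearMap.neg_apply] at this
    linarith
  have hskewg' : ∀ x y, g' (J x) y = - g' x (J y) := by
    intro x y
    have := hg'J (J x) y
    rw [hJJ x] at this
    simp only [map_neg, LinearMap.neg_apply] at this
    linarith
  -- A is g'-skew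
  have hAskew : ∀ x y, g' (A x) y = - g' x (A y) := by
    intro x y
    rw [← hA, hskewg, hgsym, hA, hg'sym]
  -- nondegeneracy of g'
  have hzero : ∀ u : V, (∀ y, g' u y = 0) → u = 0 := by
    intro u hu
    by_contra h
    exact (hg'pos u h).ne' (hu u)
  -- A is injective
  have hAinj : ∀ x, A x = 0 → x = 0 := by
    intro x hx
    have h1 : g (J x) (J x) = 0 := by rw [hA, hx]; simp
    have h2 : J x = 0 := by
      by_contra h
      exact (hgpos _ h).ne' h1
    have := hJJ x
    rw [h2] at this
    simp only [map_zero] at this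
    simpa using this.symm
  -- Part 1
  have hsymAA : ∀ x y, g' ((-(A * A)) x) y = g' x ((-(A * A)) y) := by
    intro x y
    simp only [LinearMap.neg_apply, Module.End.mul_apply, map_neg, LinearMap.neg_apply]
    rw [hAskew (A x) y, hAskew x (A y)]
    ring_nf
  have hposAA : ∀ x, x ≠ 0 → 0 < g' ((-(A * A)) x) x := by
    intro x hx
    have hAx : A x ≠ 0 := fun h => hx (hAinj x h)
    have : g' ((-(A * A)) x) x = g' (A x) (A x) := by
      simp only [LinearMap.neg_apply, Module.End.mul_apply, map_neg, LinearMap.neg_apply]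
      rw [hAskew (A x) x]
      ring_nf
    rw [this]
    exact hg'pos _ hAx
  refine ⟨⟨hsymAA, hposAA⟩, ?_⟩
  -- A commutes with J
  have hAJ : A * J = J * A := by
    ext x
    simp only [Module.End.mul_apply]
    have key : ∀ y, g' (A (J x) - J (A x)) y = 0 := by
      intro y
      have e1 : g' (A (J x)) y = - g x y := by
        rw [← hA, hJJ x]
        simp
      have e2 : g' (J (A x)) y = - g x y := by
        rw [hskewg', ← hA, hgJ]
      simp only [map_sub, LinearMap.sub_apply, e1, e2]
      ring
    have := hzero _ key
    exact sub_eq_zero.mp this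
  -- the canonical square root P = -(J*A)
  set P : Module.End ℝ V := -(J * A) with hPdef
  have hPg : ∀ x y, g' (P x) y = g x y := by
    intro x y
    have : g' (J (A x)) y = - g x y := by
      rw [hskewg', ← hA, hgJ]
    simp only [hPdef, LinearMap.neg_apply, Module.End.mul_apply, map_neg, LinearMap.neg_apply, this]
    ring
  have hPsym : ∀ x y, g' (P x) y = g' x (P y) := by
    intro x y
    rw [hPg, hgsym, ← hPg, hg'sym]
  have hPpos : ∀ x, x ≠ 0 → 0 < g' (P x) x := by
    intro x hx
    rw [hPg]
    exact hgpos x hx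
  have hPP : P * P = -(A * A) := by
    have h1 : P * P = J * (A * J) * A := by rw [hPdef]; noncomm_ring
    rw [hAJ] at h1
    have h2 : J * (J * A) * A = (J * J) * (A * A) := by noncomm_ring
    rw [h1, h2, hJ]
    simp
  -- P is a unit
  have hPinj : Function.Injective P := by
    intro x y hxy
    by_contra h
    have hne : x - y ≠ 0 := sub_ne_zero.mpr (fun e => h e)
    have : P (x - y) = 0 := by rw [map_sub, hxy, sub_self]
    have := hPpos (x - y) hne
    rw [‹P (x - y) = 0›] at this
    simp at this
  have hPunit : IsUnit P := by
    rw [LinearMap.isUnit_iff_ker_eq_bot]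
    exact LinearMap.ker_eq_bot.mpr hPinj
  intro H hHsym hHpos hHsq
  have hHP : H = P :=
    sqrt_unique_aux g' hg'sym hg'pos H P hHsym hHpos hPsym hPpos (by rw [hHsq, hPP])
  obtain ⟨u, hu⟩ := hPunit
  rw [hHP, ← hu, Ring.inverse_unit, Units.mul_inv_eq_iff_eq_mul, hu, hPdef]
  rw [mul_neg, ← mul_assoc, hJ]
  simp
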